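/- Under the hypotheses of the fixed-point setting (ω ∈ [0,1]; Q_ω nonsingular M-matrix with Q_ω·1 > 0; splittings A = A₁ − A₂, D = D₁ − D₂; Ã = (A₁)_ω − |A₂|, D̃ = (D₁)_ω − |D₂|, B̃ = |B|, C̃ = |C|; I⊗(A₁)_ω + ((D₁)_ω)ᵀ⊗I a nonsingular M-matrix; Q̃ = [[D̃, −C̃], [−B̃, Ã]] a nonsingular M-matrix with Q̃ ≤ Q_ω and Q̃·1 > 0), let Φ̃ be the minimal nonnegative solution of XC̃X − XD̃ − ÃX + B̃ = 0 and Φ the unique solution of XCX − XD − AX + B = 0 with |Φ| ≤ Φ̃. Then ρ((I⊗A₁ + D₁ᵀ⊗I)⁻¹(I⊗(A₂ + ΦC) + (D₂ + CΦ)ᵀ⊗I)) ≤ ρ((I⊗(A₁)_ω + ((D₁)_ω)ᵀ⊗I)⁻¹(I⊗(|A₂| + Φ̃C̃) + (|D₂| + C̃Φ̃)ᵀ⊗I)) < 1. -/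

import Mathlib

open Matrix Filter Kronecker

noncomputable section

/-- The ω-weighted linear functional `z ↦ ω·Re z + (1-ω)·Im z`. -/
def wlin (ω : ℝ) (z : ℂ) : ℝ := ω * z.re + (1 - ω) * z.im

/-- The ω-comparison matrix of a complex square matrix. -/
def omegaComp {N : Type*} [DecidableEq N] (ω : ℝ) (B : Matrix N N ℂ) : Matrix N N ℝ :=
  Matrix.of fun i j => if i = j then wlin ω (B i i) else -‖B i j‖

/-- A real square matrix is a nonsingular M-matrix: nonpositive off-diagonal entries and
`M *ᵥ u > 0` entrywise for some entrywise positive `u`. -/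
def IsNonsingMMatrix {N : Type*} [Fintype N] (M : Matrix N N ℝ) : Prop :=
  (∀ i j, i ≠ j → M i j ≤ 0) ∧ ∃ u : N → ℝ, (∀ i, 0 < u i) ∧ ∀ i, 0 < (M *ᵥ u) i

/-- Entrywise absolute value of a complex matrix. -/
def cabs {α β : Type*} (M : Matrix α β ℂ) : Matrix α β ℝ :=
  Matrix.of fun i j => ‖M i j‖

/-- Spectral radius of a complex square matrix: supremum of the moduli of its eigenvalues. -/
def specRad {N : Type*} [Fintype N] [DecidableEq N] (M : Matrix N N ℂ) : ℝ :=
  ⨆ μ ∈ spectrum ℂ M, ‖μ‖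

/-- Complexification of a real matrix. -/
def realToC {α β : Type*} (M : Matrix α β ℝ) : Matrix α β ℂ := M.map Complex.ofReal
set_option linter.unusedSectionVars false
open scoped ENNReal NNReal
set_option maxHeartbeats 1000000
section Helpers

variable {ι : Type*} [Fintype ι] [DecidableEq ι]

/-- Z-matrix with a positive vector mapping to nonneg implies nonneg solution. -/
lemma zsolve_nonneg (M : Matrix ι ι ℝ) (hZ : ∀ i j, i ≠ j → M i j ≤ 0)
    (u : ι → ℝ) (hu : ∀ i, 0 < u i) (hMu : ∀ i, 0 < (M *ᵥ u) i)
    (x c : ι → ℝ) (hx : M *ᵥ x = c) (hc : ∀ i, 0 ≤ c i) : ∀ i, 0 ≤ x i := by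
  by_contra hcon
  push_neg at hcon
  obtain ⟨i₁, hi₁⟩ := hcon
  have hne : (Finset.univ : Finset ι).Nonempty := ⟨i₁, Finset.mem_univ _⟩
  obtain ⟨i₀, -, hmin⟩ := Finset.exists_min_image Finset.univ (fun i => x i / u i) hne
  set t := x i₀ / u i₀ with ht
  have htneg : t < 0 := by
    have := hmin i₁ (Finset.mem_univ _)
    have : t ≤ x i₁ / u i₁ := this
    have h2 : x i₁ / u i₁ < 0 := div_neg_of_neg_of_pos hi₁ (hu i₁)
    linarith
  have hxt : ∀ j, t * u j ≤ x j := by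
    intro j
    have := hmin j (Finset.mem_univ _)
    calc t * u j ≤ (x j / u j) * u j := by
          exact mul_le_mul_of_nonneg_right this (le_of_lt (hu j))
      _ = x j := div_mul_cancel₀ _ (ne_of_gt (hu j))
  have hxi0 : x i₀ = t * u i₀ := by
    rw [ht, div_mul_cancel₀ _ (ne_of_gt (hu i₀))]
  have key : c i₀ ≤ t * (M *ᵥ u) i₀ := by
    rw [← hx]
    show ∑ j, M i₀ j * x j ≤ t * ∑ j, M i₀ j * u j
    rw [Finset.mul_sum]
    apply Finset.sum_le_sum
    intro j _
    by_cases hj : j = i₀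
    · subst hj; rw [hxi0]; ring_nf; exact le_refl _
    · have hMij : M i₀ j ≤ 0 := hZ i₀ j (Ne.symm hj)
      have := hxt j
      nlinarith
  have : t * (M *ᵥ u) i₀ < 0 := mul_neg_of_neg_of_pos htneg (hMu i₀)
  exact absurd (le_trans (hc i₀) key) (not_le.mpr this)

/-- An M-matrix (in our sense) has nonzero determinant. -/
lemma mmatrix_det_ne_zero (M : Matrix ι ι ℝ) (hM : IsNonsingMMatrix M) : M.det ≠ 0 := by
  obtain ⟨hZ, u, hu, hMu⟩ := hM
  intro hdet
  obtain ⟨v, hv, hv0⟩ := (Matrix.exists_mulVec_eq_zero_iff).mpr hdet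
  have h1 : ∀ i, 0 ≤ v i :=
    zsolve_nonneg M hZ u hu hMu v 0 hv0 (fun i => le_refl _)
  have h2 : ∀ i, 0 ≤ (-v) i := by
    apply zsolve_nonneg M hZ u hu hMu (-v) 0
    · rw [Matrix.mulVec_neg, hv0]; simp
    · exact fun i => le_refl _
  apply hv
  funext i
  have := h1 i; have := h2 i; simp at this ⊢; linarith

lemma mmatrix_isUnit_det (M : Matrix ι ι ℝ) (hM : IsNonsingMMatrix M) : IsUnit M.det :=
  isUnit_iff_ne_zero.mpr (mmatrix_det_ne_zero M hM)

/-- inverse of an M-matrix is entrywise nonneg -/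
lemma mmatrix_inv_nonneg (M : Matrix ι ι ℝ) (hM : IsNonsingMMatrix M) :
    ∀ i j, 0 ≤ M⁻¹ i j := by
  obtain ⟨hZ, u, hu, hMu⟩ := hM
  intro i j
  have hdet := mmatrix_isUnit_det M ⟨hZ, u, hu, hMu⟩
  have hcol : M *ᵥ (fun k => M⁻¹ k j) = (fun k => (1 : Matrix ι ι ℝ) k j) := by
    funext i'
    show ∑ k, M i' k * M⁻¹ k j = _
    have : (M * M⁻¹) i' j = ((1 : Matrix ι ι ℝ)) i' j := by
      rw [Matrix.mul_nonsing_inv M hdet]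
    simpa [Matrix.mul_apply] using this
  have := zsolve_nonneg M hZ u hu hMu _ _ hcol (by
    intro k
    by_cases h : k = j <;> simp [Matrix.one_apply, h])
  exact this i

/-- mulVec with entrywise-nonneg matrix is monotone -/
lemma mulVec_mono {M : Matrix ι ι ℝ} (hM : ∀ i j, 0 ≤ M i j) {x y : ι → ℝ}
    (h : ∀ i, x i ≤ y i) : ∀ i, (M *ᵥ x) i ≤ (M *ᵥ y) i := by
  intro i
  apply Finset.sum_le_sum
  intro j _
  exact mul_le_mul_of_nonneg_left (h j) (hM i j)

/-- transpose of an M-matrix is an M-matrix -/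
lemma mmatrix_transpose (M : Matrix ι ι ℝ) (hM : IsNonsingMMatrix M) :
    IsNonsingMMatrix Mᵀ := by
  have hdet := mmatrix_isUnit_det M hM
  have hinv := mmatrix_inv_nonneg M hM
  refine ⟨fun i j hij => hM.1 j i (Ne.symm hij), fun i => ∑ j, M⁻¹ j i, ?_, ?_⟩
  · intro i
    apply Finset.sum_pos' (fun j _ => hinv j i)
    by_contra hcon
    push_neg at hcon
    have hall : ∀ j, M⁻¹ j i = 0 := by
      intro j
      have h1 := hcon j (Finset.mem_univ j)
      have h2 := hinv j i
      linarith
    have : (M * M⁻¹) i i = 0 := by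
      rw [Matrix.mul_apply]
      apply Finset.sum_eq_zero
      intro k _
      rw [hall k, mul_zero]
    rw [Matrix.mul_nonsing_inv M hdet] at this
    simp [Matrix.one_apply] at this
  · intro a
    have : (Mᵀ *ᵥ fun i => ∑ j, M⁻¹ j i) a = ∑ j, (M⁻¹ * M) j a := by
      show ∑ b, Mᵀ a b * ∑ j, M⁻¹ j b = _
      simp_rw [Matrix.mul_apply, Matrix.transpose_apply, Finset.mul_sum]
      rw [Finset.sum_comm]
      apply Finset.sum_congr rfl
      intro j _
      apply Finset.sum_congr rfl
      intro b _
      ring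
    rw [this, Matrix.nonsing_inv_mul M hdet]
    have : ∑ j, (1 : Matrix ι ι ℝ) j a = 1 := by
      simp [Matrix.one_apply]
    rw [this]
    norm_num

end Helpers
section SpecBounds

variable {ι : Type*} [Fintype ι] [DecidableEq ι]

/-- eigenvalue extraction from matrix spectrum -/
lemma spectrum_exists_eigvec {M : Matrix ι ι ℂ} {μ : ℂ} (h : μ ∈ spectrum ℂ M) :
    ∃ x : ι → ℂ, x ≠ 0 ∧ M *ᵥ x = μ • x := by
  rw [spectrum.mem_iff] at h
  rw [Matrix.isUnit_iff_isUnit_det, isUnit_iff_ne_zero, not_not] at h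
  obtain ⟨v, hv, h0⟩ := (Matrix.exists_mulVec_eq_zero_iff).mpr h
  refine ⟨v, hv, ?_⟩
  have : (algebraMap ℂ (Matrix ι ι ℂ) μ - M) *ᵥ v = μ • v - M *ᵥ v := by
    rw [Matrix.sub_mulVec, Algebra.algebraMap_eq_smul_one, Matrix.smul_mulVec,
      Matrix.one_mulVec]
  rw [this] at h0
  rw [sub_eq_zero] at h0
  exact h0.symm

/-- Weighted row-sum bound on all spectrum elements. -/
lemma spectrum_abs_le (M : Matrix ι ι ℂ) (v : ι → ℝ) (hv : ∀ i, 0 < v i) (θ : ℝ)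
    (h : ∀ i, ∑ j, ‖M i j‖ * v j ≤ θ * v i) :
    ∀ μ ∈ spectrum ℂ M, ‖μ‖ ≤ θ := by
  intro μ hμ
  obtain ⟨x, hx, hevec⟩ := spectrum_exists_eigvec hμ
  obtain ⟨j₁, hj₁⟩ := Function.ne_iff.mp hx
  have hne : (Finset.univ : Finset ι).Nonempty := ⟨j₁, Finset.mem_univ _⟩
  obtain ⟨i₀, -, hmax⟩ := Finset.exists_max_image Finset.univ
    (fun i => ‖x i‖ / v i) hne
  set r := ‖x i₀‖ / v i₀ with hr
  have hrpos : 0 < r := by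
    have h1 := hmax j₁ (Finset.mem_univ _)
    have h2 : 0 < ‖x j₁‖ / v j₁ :=
      div_pos (by simpa [norm_pos_iff] using hj₁) (hv j₁)
    exact lt_of_lt_of_le h2 h1
  have hxk : ∀ k, ‖x k‖ ≤ r * v k := by
    intro k
    have := hmax k (Finset.mem_univ _)
    calc ‖x k‖ = (‖x k‖ / v k) * v k :=
          (div_mul_cancel₀ _ (ne_of_gt (hv k))).symm
      _ ≤ r * v k := mul_le_mul_of_nonneg_right this (le_of_lt (hv k))
  have hxi0 : ‖x i₀‖ = r * v i₀ :=
    (div_mul_cancel₀ _ (ne_of_gt (hv i₀))).symm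
  have key : ‖μ‖ * ‖x i₀‖ ≤ θ * (r * v i₀) := by
    have h1 : ‖μ‖ * ‖x i₀‖ = ‖(M *ᵥ x) i₀‖ := by
      rw [hevec]; simp [norm_mul]
    rw [h1]
    calc ‖(M *ᵥ x) i₀‖ ≤ ∑ j, ‖M i₀ j * x j‖ := by
          exact norm_sum_le _ _
      _ ≤ ∑ j, ‖M i₀ j‖ * (r * v j) := by
          apply Finset.sum_le_sum
          intro j _
          rw [norm_mul]
          exact mul_le_mul_of_nonneg_left (hxk j) (norm_nonneg _)
      _ = r * ∑ j, ‖M i₀ j‖ * v j := by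
          rw [Finset.mul_sum]; apply Finset.sum_congr rfl; intro j _; ring
      _ ≤ r * (θ * v i₀) := mul_le_mul_of_nonneg_left (h i₀) (le_of_lt hrpos)
      _ = θ * (r * v i₀) := by ring
  rw [hxi0] at key
  have hpos : 0 < r * v i₀ := mul_pos hrpos (hv i₀)
  exact le_of_mul_le_mul_right (by linarith) hpos

end SpecBounds
section SpecRadLemmas

variable {ι : Type*} [Fintype ι] [DecidableEq ι]

lemma specRad_le (M : Matrix ι ι ℂ) (v : ι → ℝ) (hv : ∀ i, 0 < v i) (θ : ℝ) (hθ : 0 ≤ θ)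
    (h : ∀ i, ∑ j, ‖M i j‖ * v j ≤ θ * v i) : specRad M ≤ θ := by
  apply Real.iSup_le _ hθ
  intro μ
  apply Real.iSup_le _ hθ
  intro hμ
  exact spectrum_abs_le M v hv θ h μ hμ

lemma spectrum_abs_le_total (M : Matrix ι ι ℂ) :
    ∀ μ ∈ spectrum ℂ M, ‖μ‖ ≤ ∑ i, ∑ j, ‖M i j‖ := by
  apply spectrum_abs_le M 1 (fun _ => one_pos)
  intro i
  simp only [Pi.one_apply, mul_one]
  exact Finset.single_le_sum (f := fun i => ∑ j, ‖M i j‖)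
    (fun k _ => Finset.sum_nonneg fun j _ => norm_nonneg _) (Finset.mem_univ i)

lemma le_specRad (M : Matrix ι ι ℂ) {μ : ℂ} (hμ : μ ∈ spectrum ℂ M) :
    ‖μ‖ ≤ specRad M := by
  set θ₀ := ∑ i, ∑ j, ‖M i j‖ with hθ₀
  have hbdd : BddAbove (Set.range fun ν => ⨆ _ : ν ∈ spectrum ℂ M, ‖ν‖) := by
    refine ⟨max θ₀ 0, ?_⟩
    rintro y ⟨ν, rfl⟩
    show (⨆ _ : ν ∈ spectrum ℂ M, ‖ν‖) ≤ max θ₀ 0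
    by_cases hν : ν ∈ spectrum ℂ M
    · haveI : Nonempty (ν ∈ spectrum ℂ M) := ⟨hν⟩
      rw [ciSup_const]
      exact le_max_of_le_left (spectrum_abs_le_total M ν hν)
    · haveI : IsEmpty (ν ∈ spectrum ℂ M) := ⟨hν⟩
      rw [Real.iSup_of_isEmpty]
      exact le_max_right _ _
  have h1 : ‖μ‖ = ⨆ _ : μ ∈ spectrum ℂ M, ‖μ‖ := by
    haveI : Nonempty (μ ∈ spectrum ℂ M) := ⟨hμ⟩
    rw [ciSup_const]
  rw [h1]
  exact le_ciSup hbdd μ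

lemma specRad_nonneg (M : Matrix ι ι ℂ) : 0 ≤ specRad M := by
  apply Real.iSup_nonneg
  intro μ
  apply Real.iSup_nonneg
  intro _
  exact norm_nonneg _

end SpecRadLemmas

section Gelfand

attribute [local instance] Matrix.linftyOpNormedRing Matrix.linftyOpNormedAlgebra

variable {ι : Type*} [Fintype ι] [DecidableEq ι]

lemma realToC_pow (R : Matrix ι ι ℝ) (k : ℕ) : realToC (R ^ k) = (realToC R) ^ k := by
  have : realToC (R ^ k) = (Complex.ofRealHom.mapMatrix : Matrix ι ι ℝ →+* Matrix ι ι ℂ) (R ^ k) := rfl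
  rw [this, map_pow]
  rfl

lemma abs_pow_le {A : Matrix ι ι ℂ} {R : Matrix ι ι ℝ}
    (h : ∀ i j, ‖A i j‖ ≤ R i j) (k : ℕ) :
    ∀ i j, ‖(A ^ k) i j‖ ≤ (R ^ k) i j := by
  induction k with
  | zero =>
    intro i j
    simp only [pow_zero]
    by_cases hij : i = j <;> simp [Matrix.one_apply, hij]
  | succ k ih =>
    intro i j
    rw [pow_succ, pow_succ, Matrix.mul_apply, Matrix.mul_apply]
    calc ‖∑ l, (A ^ k) i l * A l j‖ ≤ ∑ l, ‖(A ^ k) i l * A l j‖ :=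
          norm_sum_le _ _
      _ ≤ ∑ l, (R ^ k) i l * R l j := by
          apply Finset.sum_le_sum
          intro l _
          rw [norm_mul]
          exact mul_le_mul (ih i l) (h l j) (norm_nonneg _)
            (le_trans (norm_nonneg _) (ih i l))

lemma specRad_le_specRad_of_abs_le (A : Matrix ι ι ℂ) (R : Matrix ι ι ℝ)
    (h : ∀ i j, ‖A i j‖ ≤ R i j) :
    specRad A ≤ specRad (realToC R) := by
  haveI : CompleteSpace (Matrix ι ι ℂ) := FiniteDimensional.complete ℂ _
  -- norm comparison of powers
  have hnorm : ∀ k : ℕ, ‖A ^ k‖₊ ≤ ‖(realToC R) ^ k‖₊ := by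
    intro k
    rw [← realToC_pow, Matrix.linfty_opNNNorm_def, Matrix.linfty_opNNNorm_def]
    apply Finset.sup_mono_fun
    intro i _
    apply Finset.sum_le_sum
    intro j _
    have h1 : ‖(A ^ k) i j‖₊ = ‖(A ^ k) i j‖.toNNReal := by
      simp [Real.toNNReal, nnnorm]
    have habs := abs_pow_le h k i j
    have hRnn : 0 ≤ (R ^ k) i j := le_trans (norm_nonneg _) habs
    have h2 : ‖(realToC (R ^ k)) i j‖ = (R ^ k) i j := by
      show ‖((R ^ k) i j : ℂ)‖ = _
      rw [Complex.norm_real, Real.norm_eq_abs, abs_of_nonneg hRnn]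
    have h3 : ‖(A ^ k) i j‖ ≤ ‖(realToC (R ^ k)) i j‖ := by rw [h2]; exact habs
    exact h3
  -- Gelfand limits
  have gA := spectrum.pow_nnnorm_pow_one_div_tendsto_nhds_spectralRadius A
  have gR := spectrum.pow_nnnorm_pow_one_div_tendsto_nhds_spectralRadius (realToC R)
  have hsr : spectralRadius ℂ A ≤ spectralRadius ℂ (realToC R) := by
    apply le_of_tendsto_of_tendsto' gA gR
    intro k
    apply ENNReal.rpow_le_rpow _ (by positivity)
    exact_mod_cast hnorm k
  -- bridge
  have hfinR : spectralRadius ℂ (realToC R) ≤ ENNReal.ofReal (specRad (realToC R)) := by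
    apply iSup₂_le
    intro μ hμ
    have := le_specRad (realToC R) hμ
    have h1 : ((‖μ‖₊ : NNReal) : ENNReal) = ENNReal.ofReal (‖μ‖) := by
      rw [ofReal_norm, enorm_eq_nnnorm]
    rw [h1]
    exact ENNReal.ofReal_le_ofReal this
  have hne : spectralRadius ℂ (realToC R) ≠ ⊤ :=
    ne_top_of_le_ne_top ENNReal.ofReal_ne_top hfinR
  have hAle : specRad A ≤ (spectralRadius ℂ A).toReal := by
    have htop : spectralRadius ℂ A ≠ ⊤ := ne_top_of_le_ne_top hne hsr
    apply Real.iSup_le _ ENNReal.toReal_nonneg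
    intro μ
    apply Real.iSup_le _ ENNReal.toReal_nonneg
    intro hμ
    have h1 : (‖μ‖₊ : ℝ≥0∞) ≤ spectralRadius ℂ A := le_iSup₂ (f := fun k _ => (‖k‖₊ : ℝ≥0∞)) μ hμ
    have := ENNReal.toReal_mono htop h1
    simpa using this
  calc specRad A ≤ (spectralRadius ℂ A).toReal := hAle
    _ ≤ (spectralRadius ℂ (realToC R)).toReal := ENNReal.toReal_mono hne hsr
    _ ≤ specRad (realToC R) := by
        have := ENNReal.toReal_mono ENNReal.ofReal_ne_top hfinR
        rwa [ENNReal.toReal_ofReal (specRad_nonneg _)] at this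

end Gelfand
section Hmat

variable {ι : Type*} [Fintype ι] [DecidableEq ι]

lemma hmat_key {W : Matrix ι ι ℝ} {Mc : Matrix ι ι ℂ}
    (hdiag : ∀ i, W i i ≤ ‖Mc i i‖)
    (hoff : ∀ i j, i ≠ j → ‖Mc i j‖ ≤ -(W i j))
    (x : ι → ℂ) (c : ι → ℂ) (hx : Mc *ᵥ x = c) :
    ∀ i, (W *ᵥ fun k => ‖x k‖) i ≤ ‖c i‖ := by
  intro i
  have hci : c i = ∑ j, Mc i j * x j := by rw [← hx]; rfl
  have hsplitC : ∑ j, Mc i j * x j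
      = Mc i i * x i + ∑ j ∈ Finset.univ.erase i, Mc i j * x j :=
    (Finset.add_sum_erase _ (fun j => Mc i j * x j) (Finset.mem_univ i)).symm
  have htri : ‖Mc i i‖ * ‖x i‖
      - ∑ j ∈ Finset.univ.erase i, ‖Mc i j‖ * ‖x j‖
      ≤ ‖c i‖ := by
    have heq : Mc i i * x i = c i - ∑ j ∈ Finset.univ.erase i, Mc i j * x j := by
      rw [hci, hsplitC]; ring
    have h1 : ‖Mc i i * x i‖ ≤ ‖c i‖
        + ∑ j ∈ Finset.univ.erase i, ‖Mc i j * x j‖ := by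
      rw [heq]
      calc ‖c i - ∑ j ∈ Finset.univ.erase i, Mc i j * x j‖
          ≤ ‖c i‖ + ‖∑ j ∈ Finset.univ.erase i, Mc i j * x j‖ :=
            norm_sub_le _ _
        _ ≤ _ := by
            gcongr
            exact norm_sum_le _ _
    simp_rw [norm_mul] at h1
    linarith
  show ∑ j, W i j * ‖x j‖ ≤ _
  rw [← Finset.add_sum_erase _ (fun j => W i j * ‖x j‖) (Finset.mem_univ i)]
  have h2 : W i i * ‖x i‖ ≤ ‖Mc i i‖ * ‖x i‖ :=
    mul_le_mul_of_nonneg_right (hdiag i) (norm_nonneg _)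
  have h3 : ∑ j ∈ Finset.univ.erase i, W i j * ‖x j‖
      ≤ -∑ j ∈ Finset.univ.erase i, ‖Mc i j‖ * ‖x j‖ := by
    rw [← Finset.sum_neg_distrib]
    apply Finset.sum_le_sum
    intro j hj
    have hji : i ≠ j := (Finset.ne_of_mem_erase hj).symm
    have := hoff i j hji
    have habs := norm_nonneg (x j)
    nlinarith
  linarith

/-- Complex matrix dominated (in comparison sense) by a real M-matrix: invertibility
and entrywise domination of inverses. -/
lemma hmat_inv {W : Matrix ι ι ℝ} (hW : IsNonsingMMatrix W) {Mc : Matrix ι ι ℂ}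
    (hdiag : ∀ i, W i i ≤ ‖Mc i i‖)
    (hoff : ∀ i j, i ≠ j → ‖Mc i j‖ ≤ -(W i j)) :
    IsUnit Mc.det ∧ ∀ i j, ‖Mc⁻¹ i j‖ ≤ W⁻¹ i j := by
  have hWdet := mmatrix_isUnit_det W hW
  have hWinv := mmatrix_inv_nonneg W hW
  have hsolve : ∀ (x c : ι → ℂ), Mc *ᵥ x = c →
      ∀ i, ‖x i‖ ≤ (W⁻¹ *ᵥ fun k => ‖c k‖) i := by
    intro x c hx i
    have hkey := hmat_key hdiag hoff x c hx
    have : (fun k => ‖x k‖) = W⁻¹ *ᵥ (W *ᵥ fun k => ‖x k‖) := by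
      rw [Matrix.mulVec_mulVec, Matrix.nonsing_inv_mul W hWdet, Matrix.one_mulVec]
    rw [show ‖x i‖ = (fun k => ‖x k‖) i from rfl, this]
    exact mulVec_mono hWinv hkey i
  have hdet : IsUnit Mc.det := by
    rw [isUnit_iff_ne_zero]
    intro hdet0
    obtain ⟨v, hv, hv0⟩ := (Matrix.exists_mulVec_eq_zero_iff).mpr hdet0
    have := hsolve v 0 hv0
    apply hv
    funext k
    have h1 := this k
    have h2 : (W⁻¹ *ᵥ fun k => ‖((0 : ι → ℂ) k)‖) k = 0 := by
      have h0 : (fun k => ‖((0 : ι → ℂ) k)‖) = (0 : ι → ℝ) := by funext; simp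
      rw [h0, Matrix.mulVec_zero]
      rfl
    rw [h2] at h1
    have := norm_nonneg (v k)
    have : ‖v k‖ = 0 := le_antisymm h1 this
    exact norm_eq_zero.mp this
  refine ⟨hdet, ?_⟩
  intro i j
  have hcol : Mc *ᵥ (fun k => Mc⁻¹ k j) = (fun k => (1 : Matrix ι ι ℂ) k j) := by
    funext i'
    show ∑ k, Mc i' k * Mc⁻¹ k j = _
    have : (Mc * Mc⁻¹) i' j = ((1 : Matrix ι ι ℂ)) i' j := by
      rw [Matrix.mul_nonsing_inv Mc hdet]
    simpa [Matrix.mul_apply] using this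
  have := hsolve _ _ hcol i
  calc ‖Mc⁻¹ i j‖ ≤ (W⁻¹ *ᵥ fun k => ‖((1 : Matrix ι ι ℂ) k j)‖) i := this
    _ = W⁻¹ i j := by
        show ∑ k, W⁻¹ i k * ‖((1 : Matrix ι ι ℂ) k j)‖ = _
        rw [Finset.sum_eq_single j]
        · simp [Matrix.one_apply]
        · intro k _ hkj
          simp [Matrix.one_apply, hkj]
        · intro h; exact absurd (Finset.mem_univ j) h

end Hmat

section KronBridge

variable {α : Type*} [CommRing α] {κ₁ κ₂ : Type*} [Fintype κ₁] [Fintype κ₂]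
  [DecidableEq κ₁] [DecidableEq κ₂]

/-- vectorization: `vecM X (i,j) = X j i`. -/
def vecM (X : Matrix κ₂ κ₁ α) : κ₁ × κ₂ → α := fun p => X p.2 p.1

lemma kron_mulVec (M₁ : Matrix κ₂ κ₂ α) (M₂ : Matrix κ₁ κ₁ α) (X : Matrix κ₂ κ₁ α) :
    ((1 : Matrix κ₁ κ₁ α) ⊗ₖ M₁ + M₂ᵀ ⊗ₖ (1 : Matrix κ₂ κ₂ α)) *ᵥ vecM X
      = vecM (M₁ * X + X * M₂) := by
  funext p
  obtain ⟨i, j⟩ := p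
  show ∑ q : κ₁ × κ₂, ((1 : Matrix κ₁ κ₁ α) ⊗ₖ M₁ + M₂ᵀ ⊗ₖ (1 : Matrix κ₂ κ₂ α)) (i,j) q
      * X q.2 q.1 = (M₁ * X) j i + (X * M₂) j i
  rw [Fintype.sum_prod_type]
  have : ∀ k l, ((1 : Matrix κ₁ κ₁ α) ⊗ₖ M₁ + M₂ᵀ ⊗ₖ (1 : Matrix κ₂ κ₂ α)) (i,j) (k,l)
      = (if i = k then M₁ j l else 0) + (if j = l then M₂ k i else 0) := by
    intro k l
    rw [Matrix.add_apply, Matrix.kroneckerMap_apply, Matrix.kroneckerMap_apply,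
      Matrix.transpose_apply, Matrix.one_apply, Matrix.one_apply]
    by_cases h1 : i = k <;> by_cases h2 : j = l <;> simp [h1, h2]
  simp_rw [this, add_mul, ite_mul, zero_mul, Finset.sum_add_distrib]
  have e1 : ∑ k, ∑ l, (if i = k then M₁ j l * X l k else 0) = (M₁ * X) j i := by
    rw [Finset.sum_comm]
    simp [Finset.sum_ite_eq, Matrix.mul_apply]
  have e2 : ∑ k, ∑ l, (if j = l then M₂ k i * X l k else 0) = (X * M₂) j i := by
    simp [Finset.sum_ite_eq, Matrix.mul_apply, mul_comm]
  rw [e1, e2]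

end KronBridge
section IterHelpers

variable {ι κ ρ : Type*} [Fintype ι] [Fintype κ] [Fintype ρ] [DecidableEq ι] [DecidableEq κ]

lemma mul_mono {A A' : Matrix ι κ ℝ} {B B' : Matrix κ ρ ℝ}
    (hA0 : ∀ i j, 0 ≤ A i j) (hA : ∀ i j, A i j ≤ A' i j)
    (hB0 : ∀ i j, 0 ≤ B i j) (hB : ∀ i j, B i j ≤ B' i j) :
    ∀ i j, (A * B) i j ≤ (A' * B') i j := by
  intro i j
  rw [Matrix.mul_apply, Matrix.mul_apply]
  apply Finset.sum_le_sum
  intro c _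
  nlinarith [hA0 i c, hA i c, hB0 c j, hB c j]

lemma mul_nonneg' {A : Matrix ι κ ℝ} {B : Matrix κ ρ ℝ}
    (hA0 : ∀ i j, 0 ≤ A i j) (hB0 : ∀ i j, 0 ≤ B i j) :
    ∀ i j, 0 ≤ (A * B) i j := by
  intro i j
  rw [Matrix.mul_apply]
  exact Finset.sum_nonneg fun c _ => mul_nonneg (hA0 i c) (hB0 c j)

lemma mulVec_mono_vec {M : Matrix ι κ ℝ} (hM : ∀ i j, 0 ≤ M i j) {x y : κ → ℝ}
    (h : ∀ i, x i ≤ y i) : ∀ i, (M *ᵥ x) i ≤ (M *ᵥ y) i := by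
  intro i
  apply Finset.sum_le_sum
  intro j _
  exact mul_le_mul_of_nonneg_left (h j) (hM i j)

lemma mulVec_mono_mat {A A' : Matrix ι κ ℝ} {w : κ → ℝ}
    (hw : ∀ i, 0 ≤ w i) (hA : ∀ i j, A i j ≤ A' i j) :
    ∀ i, (A *ᵥ w) i ≤ (A' *ᵥ w) i := by
  intro i
  apply Finset.sum_le_sum
  intro c _
  exact mul_le_mul_of_nonneg_right (hA i c) (hw c)

lemma mulVec_nonneg' {A : Matrix ι κ ℝ} {w : κ → ℝ}
    (hA : ∀ i j, 0 ≤ A i j) (hw : ∀ i, 0 ≤ w i) : ∀ i, 0 ≤ (A *ᵥ w) i := by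
  intro i
  exact Finset.sum_nonneg fun c _ => mul_nonneg (hA i c) (hw c)

end IterHelpers

section Iteration

variable {m n : ℕ}

/-- Main iteration lemma: the minimal nonnegative solution has row sums at most 1. -/
lemma minsol_rowsum_le_one
    (At : Matrix (Fin m) (Fin m) ℝ) (Dt : Matrix (Fin n) (Fin n) ℝ)
    (Bt : Matrix (Fin m) (Fin n) ℝ) (Ct : Matrix (Fin n) (Fin m) ℝ)
    (hAZ : ∀ i j, i ≠ j → At i j ≤ 0) (hDZ : ∀ i j, i ≠ j → Dt i j ≤ 0)
    (hB0 : ∀ i j, 0 ≤ Bt i j) (hC0 : ∀ i j, 0 ≤ Ct i j)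
    (hD1 : ∀ i, (Ct *ᵥ 1) i < (Dt *ᵥ 1) i)
    (hA1 : ∀ i, (Bt *ᵥ 1) i < (At *ᵥ 1) i)
    (Φt : Matrix (Fin m) (Fin n) ℝ) (hΦtPos : ∀ i j, 0 ≤ Φt i j)
    (hΦtSol : At * Φt + Φt * Dt = Bt + Φt * Ct * Φt)
    (hΦtMin : ∀ Z : Matrix (Fin m) (Fin n) ℝ, (∀ i j, 0 ≤ Z i j) →
      At * Z + Z * Dt = Bt + Z * Ct * Z → ∀ i j, Φt i j ≤ Z i j) :
    ∀ a, (Φt *ᵥ 1) a ≤ 1 := by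
  have hB1 : ∀ i, (0 : ℝ) ≤ (Bt *ᵥ 1) i := fun i => mulVec_nonneg' hB0 (fun _ => zero_le_one) i
  have hC1 : ∀ i, (0 : ℝ) ≤ (Ct *ᵥ 1) i := fun i => mulVec_nonneg' hC0 (fun _ => zero_le_one) i
  have hAt1 : ∀ i, (0 : ℝ) < (At *ᵥ 1) i := fun i => lt_of_le_of_lt (hB1 i) (hA1 i)
  have hDt1 : ∀ i, (0 : ℝ) < (Dt *ᵥ 1) i := fun i => lt_of_le_of_lt (hC1 i) (hD1 i)
  have hDtM : IsNonsingMMatrix Dt := ⟨hDZ, 1, fun _ => one_pos, hDt1⟩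
  obtain ⟨-, v, hv, hDtv⟩ := mmatrix_transpose Dt hDtM
  set K : Matrix (Fin n × Fin m) (Fin n × Fin m) ℝ :=
    (1 : Matrix (Fin n) (Fin n) ℝ) ⊗ₖ At + Dtᵀ ⊗ₖ (1 : Matrix (Fin m) (Fin m) ℝ) with hK
  have hKentry : ∀ i j k l, K (i,j) (k,l)
      = (if i = k then At j l else 0) + (if j = l then Dt k i else 0) := by
    intro i j k l
    rw [hK, Matrix.add_apply, Matrix.kroneckerMap_apply, Matrix.kroneckerMap_apply,
      Matrix.transpose_apply, Matrix.one_apply, Matrix.one_apply]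
    by_cases h1 : i = k <;> by_cases h2 : j = l <;> simp [h1, h2]
  have hKZ : ∀ p q, p ≠ q → K p q ≤ 0 := by
    rintro ⟨i, j⟩ ⟨k, l⟩ hpq
    rw [hKentry]
    by_cases h1 : i = k
    · by_cases h2 : j = l
      · exact absurd (by rw [h1, h2]) hpq
      · simpa [h1, h2] using hAZ j l h2
    · by_cases h2 : j = l
      · simpa [h1, h2] using hDZ k i (fun hki => h1 hki.symm)
      · simp [h1, h2]
  have hKM : IsNonsingMMatrix K := by
    set V : Matrix (Fin m) (Fin n) ℝ := Matrix.of (fun (_ : Fin m) (b : Fin n) => v b) with hV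
    refine ⟨hKZ, (fun p => v p.1), fun p => hv p.1, ?_⟩
    rintro ⟨i, j⟩
    have hvec : (fun p : Fin n × Fin m => v p.1) = vecM V := by
      funext p; rfl
    rw [hvec, hK, kron_mulVec]
    show (0 : ℝ) < vecM (At * V + V * Dt) (i, j)
    show (0 : ℝ) < (At * V + V * Dt) j i
    rw [Matrix.add_apply]
    have e1 : (At * V) j i = (At *ᵥ 1) j * v i := by
      rw [Matrix.mul_apply]
      show (∑ c, At j c * v i) = (∑ c, At j c * 1) * v i
      rw [Finset.sum_mul]
      apply Finset.sum_congr rfl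
      intro c _; ring
    have e2 : (V * Dt) j i = (Dtᵀ *ᵥ v) i := by
      rw [Matrix.mul_apply]
      apply Finset.sum_congr rfl
      intro c _
      show v c * Dt c i = Dtᵀ i c * v c
      rw [Matrix.transpose_apply]; ring
    rw [e1, e2]
    have h1 := hDtv i
    have h2 := hAt1 j
    have h3 := hv i
    positivity
  have hKdet := mmatrix_isUnit_det K hKM
  have hKinv := mmatrix_inv_nonneg K hKM
  set Linv : Matrix (Fin m) (Fin n) ℝ → Matrix (Fin m) (Fin n) ℝ :=
    fun R => Matrix.of fun a b => (K⁻¹ *ᵥ vecM R) (b, a) with hLinv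
  have hvecLinv : ∀ R, vecM (Linv R) = K⁻¹ *ᵥ vecM R := by
    intro R; funext p; rfl
  have hLinvEq : ∀ R, At * (Linv R) + (Linv R) * Dt = R := by
    intro R
    have h1 : vecM (At * (Linv R) + (Linv R) * Dt) = K *ᵥ vecM (Linv R) :=
      (kron_mulVec At Dt (Linv R)).symm
    rw [hvecLinv, Matrix.mulVec_mulVec, Matrix.mul_nonsing_inv K hKdet,
      Matrix.one_mulVec] at h1
    ext a b
    exact congrFun h1 (b, a)
  have hLinvUniq : ∀ R Y, At * Y + Y * Dt = R → Y = Linv R := by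
    intro R Y hY
    have h1 : K *ᵥ vecM Y = vecM R := by rw [← hY, hK]; exact kron_mulVec At Dt Y
    have h2 : vecM Y = K⁻¹ *ᵥ vecM R := by
      rw [← h1, Matrix.mulVec_mulVec, Matrix.nonsing_inv_mul K hKdet, Matrix.one_mulVec]
    ext a b
    exact congrFun h2 (b, a)
  have hLinvMono : ∀ R R', (∀ i j, R i j ≤ R' i j) → ∀ i j, Linv R i j ≤ Linv R' i j := by
    intro R R' hRR a b
    show (K⁻¹ *ᵥ vecM R) (b, a) ≤ (K⁻¹ *ᵥ vecM R') (b, a)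
    exact mulVec_mono_vec hKinv (fun p => hRR p.2 p.1) (b, a)
  have hLinv0 : Linv 0 = 0 := (hLinvUniq 0 0 (by simp)).symm
  obtain ⟨X, hX0, hXsucc⟩ : ∃ X : ℕ → Matrix (Fin m) (Fin n) ℝ,
      X 0 = 0 ∧ ∀ k, X (k+1) = Linv (Bt + X k * Ct * X k) :=
    ⟨fun k => Nat.rec 0 (fun _ Z => Linv (Bt + Z * Ct * Z)) k, rfl, fun k => rfl⟩
  have hXeq : ∀ k, At * X (k+1) + X (k+1) * Dt = Bt + X k * Ct * X k := by
    intro k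
    rw [hXsucc k]
    exact hLinvEq _
  have hInv : ∀ k, (∀ i j, 0 ≤ X k i j) ∧ (∀ i j, X k i j ≤ X (k+1) i j) ∧
      (∀ i j, X k i j ≤ Φt i j) ∧ (∀ a, (X k *ᵥ 1) a ≤ 1) := by
    intro k
    induction k with
    | zero =>
      refine ⟨by rw [hX0]; intro i j; exact le_refl 0, ?_, ?_, ?_⟩
      · intro i j
        calc X 0 i j = Linv 0 i j := by rw [hX0, hLinv0]
          _ ≤ Linv (Bt + X 0 * Ct * X 0) i j := by
              apply hLinvMono
              intro a b
              rw [hX0]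
              simp [hB0 a b]
          _ = X (0+1) i j := by rw [hXsucc 0]
      · rw [hX0]; intro i j; exact hΦtPos i j
      · rw [hX0]; intro a; simp [Matrix.zero_mulVec]
    | succ k ih =>
      obtain ⟨h0, hmono, hle, hrow⟩ := ih
      have h0' : ∀ i j, 0 ≤ X (k+1) i j := fun i j => le_trans (h0 i j) (hmono i j)
      have hQmono : ∀ i j, (Bt + X k * Ct * X k) i j ≤ (Bt + X (k+1) * Ct * X (k+1)) i j := by
        intro i j
        rw [Matrix.add_apply, Matrix.add_apply]
        have hXC0 : ∀ i j, 0 ≤ (X k * Ct) i j := mul_nonneg' h0 hC0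
        have hXCmono : ∀ i j, (X k * Ct) i j ≤ (X (k+1) * Ct) i j :=
          mul_mono h0 hmono hC0 (fun _ _ => le_refl _)
        have := mul_mono hXC0 hXCmono h0 hmono i j
        linarith
      have hmono' : ∀ i j, X (k+1) i j ≤ X (k+1+1) i j := by
        intro i j
        calc X (k+1) i j = Linv (Bt + X k * Ct * X k) i j := by rw [hXsucc k]
          _ ≤ Linv (Bt + X (k+1) * Ct * X (k+1)) i j := hLinvMono _ _ hQmono i j
          _ = X (k+1+1) i j := by rw [hXsucc (k+1)]
      have hle' : ∀ i j, X (k+1) i j ≤ Φt i j := by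
        have hΦfix : Φt = Linv (Bt + Φt * Ct * Φt) := hLinvUniq _ _ hΦtSol
        intro i j
        calc X (k+1) i j = Linv (Bt + X k * Ct * X k) i j := by rw [hXsucc k]
          _ ≤ Linv (Bt + Φt * Ct * Φt) i j := by
              apply hLinvMono
              intro a b
              rw [Matrix.add_apply, Matrix.add_apply]
              have h1 : ∀ i j, (X k * Ct) i j ≤ (Φt * Ct) i j :=
                mul_mono h0 hle hC0 (fun _ _ => le_refl _)
              have h2 := mul_mono (mul_nonneg' h0 hC0) h1 h0 hle a b
              linarith
          _ = Φt i j := by rw [← hΦfix]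
      have hrow' : ∀ a, (X (k+1) *ᵥ 1) a ≤ 1 := by
        intro a
        have hne : (Finset.univ : Finset (Fin m)).Nonempty := ⟨a, Finset.mem_univ _⟩
        obtain ⟨a₀, -, hmax⟩ := Finset.exists_max_image Finset.univ
          (fun i => (X (k+1) *ᵥ 1) i) hne
        set t := (X (k+1) *ᵥ 1) a₀ with ht
        have heq1 : (At *ᵥ (X (k+1) *ᵥ 1)) a₀ + (X (k+1) *ᵥ (Dt *ᵥ 1)) a₀
            = (Bt *ᵥ 1) a₀ + (X k *ᵥ (Ct *ᵥ (X k *ᵥ 1))) a₀ := by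
          have hc := congrArg (fun M : Matrix (Fin m) (Fin n) ℝ =>
            (M *ᵥ (1 : Fin n → ℝ)) a₀) (hXeq k)
          simpa [Matrix.add_mulVec, Pi.add_apply, ← Matrix.mulVec_mulVec] using hc
        have hb1 : t * (At *ᵥ 1) a₀ ≤ (At *ᵥ (X (k+1) *ᵥ 1)) a₀ := by
          show t * ∑ j, At a₀ j * 1 ≤ ∑ j, At a₀ j * (X (k+1) *ᵥ 1) j
          rw [Finset.mul_sum]
          apply Finset.sum_le_sum
          intro j _
          by_cases hj : j = a₀
          · subst hj; rw [← ht]; ring_nf; exact le_refl _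
          · have hAj : At a₀ j ≤ 0 := hAZ a₀ j (fun h => hj h.symm)
            have := hmax j (Finset.mem_univ j)
            nlinarith
        have hb2 : (X (k+1) *ᵥ (Ct *ᵥ 1)) a₀ ≤ (X (k+1) *ᵥ (Dt *ᵥ 1)) a₀ :=
          mulVec_mono_vec h0' (fun i => le_of_lt (hD1 i)) a₀
        have hb3 : (X k *ᵥ (Ct *ᵥ (X k *ᵥ 1))) a₀ ≤ (X (k+1) *ᵥ (Ct *ᵥ 1)) a₀ := by
          calc (X k *ᵥ (Ct *ᵥ (X k *ᵥ 1))) a₀ ≤ (X k *ᵥ (Ct *ᵥ 1)) a₀ := by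
                apply mulVec_mono_vec h0
                exact mulVec_mono_vec hC0 hrow
            _ ≤ (X (k+1) *ᵥ (Ct *ᵥ 1)) a₀ := by
                apply mulVec_mono_mat _ hmono
                exact fun i => mulVec_nonneg' hC0 (fun _ => zero_le_one) i
        have hAt1a := hAt1 a₀
        have hA1a := hA1 a₀
        have ht1 : t ≤ 1 := by nlinarith
        exact le_trans (hmax a (Finset.mem_univ a)) ht1
      exact ⟨h0', hmono', hle', hrow'⟩
  -- passage to the limit
  have hmonoAll : ∀ a b, Monotone (fun k => X k a b) :=
    fun a b => monotone_nat_of_le_succ (fun k => (hInv k).2.1 a b)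
  have hbdd : ∀ a b, BddAbove (Set.range fun k => X k a b) := by
    intro a b
    exact ⟨Φt a b, by rintro y ⟨k, rfl⟩; exact (hInv k).2.2.1 a b⟩
  set Xs : Matrix (Fin m) (Fin n) ℝ := Matrix.of fun a b => ⨆ k, X k a b with hXs
  have htend : ∀ a b, Filter.Tendsto (fun k => X k a b) Filter.atTop (nhds (Xs a b)) :=
    fun a b => tendsto_atTop_ciSup (hmonoAll a b) (hbdd a b)
  have hXsPos : ∀ a b, 0 ≤ Xs a b := by
    intro a b
    exact le_trans ((hInv 0).1 a b) (le_ciSup (hbdd a b) 0)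
  have hXsSol : At * Xs + Xs * Dt = Bt + Xs * Ct * Xs := by
    ext a b
    have hL : Filter.Tendsto (fun k => (At * X (k+1) + X (k+1) * Dt) a b) Filter.atTop
        (nhds ((At * Xs + Xs * Dt) a b)) := by
      simp only [Matrix.add_apply, Matrix.mul_apply]
      apply Filter.Tendsto.add
      · apply tendsto_finset_sum
        intro c _
        exact (((htend c b).comp (tendsto_add_atTop_nat 1)).const_mul _)
      · apply tendsto_finset_sum
        intro c _
        exact (((htend a c).comp (tendsto_add_atTop_nat 1)).mul_const _)
    have hR : Filter.Tendsto (fun k => (Bt + X k * Ct * X k) a b) Filter.atTop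
        (nhds ((Bt + Xs * Ct * Xs) a b)) := by
      simp only [Matrix.add_apply, Matrix.mul_apply]
      apply Filter.Tendsto.const_add
      apply tendsto_finset_sum
      intro c _
      apply Filter.Tendsto.mul _ (htend c b)
      apply tendsto_finset_sum
      intro d _
      exact (htend a d).mul_const _
    have hEq : (fun k => (At * X (k+1) + X (k+1) * Dt) a b)
        = (fun k => (Bt + X k * Ct * X k) a b) := by
      funext k
      rw [hXeq k]
    rw [hEq] at hL
    exact tendsto_nhds_unique hL hR
  have hΦleXs : ∀ a b, Φt a b ≤ Xs a b := hΦtMin Xs hXsPos hXsSol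
  intro a
  have h1 : (Φt *ᵥ 1) a ≤ (Xs *ᵥ 1) a :=
    mulVec_mono_mat (fun _ => zero_le_one) hΦleXs a
  have h2 : (Xs *ᵥ 1) a ≤ 1 := by
    have htendsum : Filter.Tendsto (fun k => (X k *ᵥ 1) a) Filter.atTop
        (nhds ((Xs *ᵥ 1) a)) := by
      show Filter.Tendsto (fun k => ∑ b, X k a b * 1) Filter.atTop (nhds (∑ b, Xs a b * 1))
      apply tendsto_finset_sum
      intro c _
      exact (htend a c).mul_const _
    exact le_of_tendsto' htendsum (fun k => (hInv k).2.2.2 a)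
  linarith

end Iteration
section Extra

variable {α : Type*} [CommRing α] {κ₁ κ₂ : Type*} [Fintype κ₁] [Fintype κ₂]
  [DecidableEq κ₁] [DecidableEq κ₂]

lemma kron_entry (M₁ : Matrix κ₂ κ₂ α) (M₂ : Matrix κ₁ κ₁ α) (i k : κ₁) (j l : κ₂) :
    ((1 : Matrix κ₁ κ₁ α) ⊗ₖ M₁ + M₂ᵀ ⊗ₖ (1 : Matrix κ₂ κ₂ α)) (i,j) (k,l)
      = (if i = k then M₁ j l else 0) + (if j = l then M₂ k i else 0) := by
  rw [Matrix.add_apply, Matrix.kroneckerMap_apply, Matrix.kroneckerMap_apply,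
    Matrix.transpose_apply, Matrix.one_apply, Matrix.one_apply]
  by_cases h1 : i = k <;> by_cases h2 : j = l <;> simp [h1, h2]

end Extra

section Extra2

variable {ι κ ρ : Type*} [Fintype ι] [Fintype κ] [Fintype ρ]

lemma wlin_add (ω : ℝ) (a b : ℂ) : wlin ω (a + b) = wlin ω a + wlin ω b := by
  simp only [wlin, Complex.add_re, Complex.add_im]
  ring

lemma wlin_le_abs {ω : ℝ} (hω : ω ∈ Set.Icc (0:ℝ) 1) (z : ℂ) : wlin ω z ≤ ‖z‖ := by
  obtain ⟨h0, h1⟩ := hω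
  have hre : z.re ≤ ‖z‖ := Complex.re_le_norm z
  have him : z.im ≤ ‖z‖ := (abs_le.mp (Complex.abs_im_le_norm z)).2
  simp only [wlin]
  nlinarith

lemma cabs_mul_le {P : Matrix ι κ ℂ} {P' : Matrix ι κ ℝ} {Q : Matrix κ ρ ℂ} {Q' : Matrix κ ρ ℝ}
    (hP : ∀ i j, ‖P i j‖ ≤ P' i j) (hQ : ∀ i j, ‖Q i j‖ ≤ Q' i j) :
    ∀ i j, ‖(P * Q) i j‖ ≤ (P' * Q') i j := by
  intro i j
  rw [Matrix.mul_apply, Matrix.mul_apply]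
  calc ‖∑ c, P i c * Q c j‖ ≤ ∑ c, ‖P i c * Q c j‖ :=
        norm_sum_le _ _
    _ ≤ ∑ c, P' i c * Q' c j := by
        apply Finset.sum_le_sum
        intro c _
        rw [norm_mul]
        exact mul_le_mul (hP i c) (hQ c j) (norm_nonneg _)
          (le_trans (norm_nonneg _) (hP i c))

lemma specRad_of_isEmpty {ι : Type*} [Fintype ι] [DecidableEq ι] [IsEmpty ι]
    (M : Matrix ι ι ℂ) : specRad M = 0 := by
  have hσ : spectrum ℂ M = ∅ := by
    ext μ
    simp only [Set.mem_empty_iff_false, iff_false, spectrum.mem_iff, not_not]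
    exact isUnit_of_subsingleton _
  show (⨆ μ ∈ spectrum ℂ M, ‖μ‖) = 0
  rw [hσ]
  have : ∀ μ : ℂ, (⨆ _ : μ ∈ (∅ : Set ℂ), ‖μ‖) = 0 := by
    intro μ
    haveI : IsEmpty (μ ∈ (∅ : Set ℂ)) := ⟨fun h => h⟩
    exact Real.iSup_of_isEmpty _
  simp only [this]
  exact ciSup_const

end Extra2

/-- comparison of the iteration matrices' spectral radii for the fixed-point
iteration: `ρ(complex iteration matrix) ≤ ρ(real dominating iteration matrix) < 1`. -/
theorem stmt10 {m n : ℕ} (ω : ℝ) (hω : ω ∈ Set.Icc (0 : ℝ) 1)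
    (A A₁ A₂ : Matrix (Fin m) (Fin m) ℂ) (B : Matrix (Fin m) (Fin n) ℂ)
    (C : Matrix (Fin n) (Fin m) ℂ) (D D₁ D₂ : Matrix (Fin n) (Fin n) ℂ)
    (hQ : IsNonsingMMatrix (omegaComp ω (Matrix.fromBlocks D (-C) (-B) A)))
    (hQ1 : ∀ i, 0 < ((omegaComp ω (Matrix.fromBlocks D (-C) (-B) A)) *ᵥ 1) i)
    (hA : A = A₁ - A₂) (hD : D = D₁ - D₂)
    (hKron : IsNonsingMMatrix ((1 : Matrix (Fin n) (Fin n) ℝ) ⊗ₖ omegaComp ω A₁ +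
      (omegaComp ω D₁)ᵀ ⊗ₖ (1 : Matrix (Fin m) (Fin m) ℝ)))
    (hQt : IsNonsingMMatrix (Matrix.fromBlocks (omegaComp ω D₁ - cabs D₂) (-(cabs C))
      (-(cabs B)) (omegaComp ω A₁ - cabs A₂)))
    (hQtle : ∀ i j, Matrix.fromBlocks (omegaComp ω D₁ - cabs D₂) (-(cabs C))
        (-(cabs B)) (omegaComp ω A₁ - cabs A₂) i j ≤
      omegaComp ω (Matrix.fromBlocks D (-C) (-B) A) i j)
    (hQt1 : ∀ i, 0 < ((Matrix.fromBlocks (omegaComp ω D₁ - cabs D₂) (-(cabs C))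
      (-(cabs B)) (omegaComp ω A₁ - cabs A₂)) *ᵥ 1) i)
    (Φt : Matrix (Fin m) (Fin n) ℝ)
    (hΦtPos : ∀ i j, 0 ≤ Φt i j)
    (hΦtSol : Φt * cabs C * Φt - Φt * (omegaComp ω D₁ - cabs D₂) -
      (omegaComp ω A₁ - cabs A₂) * Φt + cabs B = 0)
    (hΦtMin : ∀ Z : Matrix (Fin m) (Fin n) ℝ, (∀ i j, 0 ≤ Z i j) →
      Z * cabs C * Z - Z * (omegaComp ω D₁ - cabs D₂) -
        (omegaComp ω A₁ - cabs A₂) * Z + cabs B = 0 → ∀ i j, Φt i j ≤ Z i j)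
    (Φ : Matrix (Fin m) (Fin n) ℂ)
    (hΦSol : Φ * C * Φ - Φ * D - A * Φ + B = 0)
    (hΦle : ∀ i j, ‖Φ i j‖ ≤ Φt i j) :
    specRad (((1 : Matrix (Fin n) (Fin n) ℂ) ⊗ₖ A₁ + D₁ᵀ ⊗ₖ (1 : Matrix (Fin m) (Fin m) ℂ))⁻¹ *
        ((1 : Matrix (Fin n) (Fin n) ℂ) ⊗ₖ (A₂ + Φ * C) +
          (D₂ + C * Φ)ᵀ ⊗ₖ (1 : Matrix (Fin m) (Fin m) ℂ))) ≤
      specRad (realToC (((1 : Matrix (Fin n) (Fin n) ℝ) ⊗ₖ omegaComp ω A₁ +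
          (omegaComp ω D₁)ᵀ ⊗ₖ (1 : Matrix (Fin m) (Fin m) ℝ))⁻¹ *
        ((1 : Matrix (Fin n) (Fin n) ℝ) ⊗ₖ (cabs A₂ + Φt * cabs C) +
          (cabs D₂ + cabs C * Φt)ᵀ ⊗ₖ (1 : Matrix (Fin m) (Fin m) ℝ)))) ∧
    specRad (realToC (((1 : Matrix (Fin n) (Fin n) ℝ) ⊗ₖ omegaComp ω A₁ +
          (omegaComp ω D₁)ᵀ ⊗ₖ (1 : Matrix (Fin m) (Fin m) ℝ))⁻¹ *
        ((1 : Matrix (Fin n) (Fin n) ℝ) ⊗ₖ (cabs A₂ + Φt * cabs C) +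
          (cabs D₂ + cabs C * Φt)ᵀ ⊗ₖ (1 : Matrix (Fin m) (Fin m) ℝ)))) < 1 := by
  classical
  by_cases hne : Nonempty (Fin n × Fin m)
  case neg =>
    haveI : IsEmpty (Fin n × Fin m) := not_nonempty_iff.mp hne
    rw [specRad_of_isEmpty, specRad_of_isEmpty]
    norm_num
  case pos =>
  obtain ⟨⟨i0, j0⟩⟩ := id hne
  set Aω : Matrix (Fin m) (Fin m) ℝ := omegaComp ω A₁ with hAω
  set Dω : Matrix (Fin n) (Fin n) ℝ := omegaComp ω D₁ with hDω
  set At : Matrix (Fin m) (Fin m) ℝ := Aω - cabs A₂ with hAt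
  set Dt : Matrix (Fin n) (Fin n) ℝ := Dω - cabs D₂ with hDt
  set Bt : Matrix (Fin m) (Fin n) ℝ := cabs B with hBt
  set Ct : Matrix (Fin n) (Fin m) ℝ := cabs C with hCt
  -- block facts
  have hQtZ := hQt.1
  have hAZ : ∀ i j, i ≠ j → At i j ≤ 0 := by
    intro i j hij
    have := hQtZ (Sum.inr i) (Sum.inr j) (by simp [hij])
    simpa using this
  have hDZ : ∀ i j, i ≠ j → Dt i j ≤ 0 := by
    intro i j hij
    have := hQtZ (Sum.inl i) (Sum.inl j) (by simp [hij])
    simpa using this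
  have hB0 : ∀ i j, 0 ≤ Bt i j := fun i j => norm_nonneg (B i j)
  have hC0 : ∀ i j, 0 ≤ Ct i j := fun i j => norm_nonneg (C i j)
  have hone : (1 : Fin n ⊕ Fin m → ℝ) = Sum.elim (1 : Fin n → ℝ) (1 : Fin m → ℝ) := by funext p; cases p <;> rfl
  have hD1 : ∀ i, (Ct *ᵥ 1) i < (Dt *ᵥ 1) i := by
    intro i
    have h := hQt1 (Sum.inl i)
    rw [hone, Matrix.fromBlocks_mulVec] at h
    simp only [Sum.elim_inl, Sum.elim_comp_inl, Sum.elim_comp_inr, Pi.add_apply, Matrix.neg_mulVec, Pi.neg_apply] at h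
    linarith
  have hA1 : ∀ i, (Bt *ᵥ 1) i < (At *ᵥ 1) i := by
    intro i
    have h := hQt1 (Sum.inr i)
    rw [hone, Matrix.fromBlocks_mulVec] at h
    simp only [Sum.elim_inr, Sum.elim_comp_inl, Sum.elim_comp_inr, Pi.add_apply, Matrix.neg_mulVec, Pi.neg_apply] at h
    linarith
  -- equation in fixed-point form
  have hSol2 : At * Φt + Φt * Dt = Bt + Φt * Ct * Φt := by
    have h2 : At * Φt + Φt * Dt - (Bt + Φt * Ct * Φt)
        = -(Φt * Ct * Φt - Φt * Dt - At * Φt + Bt) := by noncomm_ring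
    rw [hΦtSol, neg_zero] at h2
    exact sub_eq_zero.mp h2
  have hMin2 : ∀ Z : Matrix (Fin m) (Fin n) ℝ, (∀ i j, 0 ≤ Z i j) →
      At * Z + Z * Dt = Bt + Z * Ct * Z → ∀ i j, Φt i j ≤ Z i j := by
    intro Z hZ0 hZeq
    apply hΦtMin Z hZ0
    have h2 : Z * Ct * Z - Z * Dt - At * Z + Bt
        = -(At * Z + Z * Dt - (Bt + Z * Ct * Z)) := by noncomm_ring
    rw [h2, hZeq, sub_self, neg_zero]
  have hrowΦ : ∀ a, (Φt *ᵥ 1) a ≤ 1 :=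
    minsol_rowsum_le_one At Dt Bt Ct hAZ hDZ hB0 hC0 hD1 hA1 Φt hΦtPos hSol2 hMin2
  -- closed-loop matrices
  set S : Matrix (Fin n) (Fin n) ℝ := Dt - Ct * Φt with hS
  have hSZ : ∀ i j, i ≠ j → S i j ≤ 0 := by
    intro i j hij
    rw [hS, Matrix.sub_apply]
    have h1 := hDZ i j hij
    have h2 := mul_nonneg' hC0 hΦtPos i j
    linarith
  have hS1 : ∀ i, 0 < (S *ᵥ 1) i := by
    intro i
    rw [hS, Matrix.sub_mulVec]
    have h1 : ((Ct * Φt) *ᵥ 1) i ≤ (Ct *ᵥ 1) i := by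
      rw [← Matrix.mulVec_mulVec]
      exact mulVec_mono_vec hC0 hrowΦ i
    have := hD1 i
    rw [Pi.sub_apply]
    linarith
  have hSM : IsNonsingMMatrix S := ⟨hSZ, 1, fun _ => one_pos, hS1⟩
  obtain ⟨-, q, hq, hSq⟩ := mmatrix_transpose S hSM
  set G : Matrix (Fin m) (Fin m) ℝ := At - Φt * Ct with hG
  set p : Fin m → ℝ := fun a => 1 - (Φt *ᵥ 1) a with hp
  have hp0 : ∀ a, 0 ≤ p a := by
    intro a
    rw [hp]
    have := hrowΦ a
    simp only []
    linarith
  have hvec1 : At *ᵥ (Φt *ᵥ 1) + Φt *ᵥ (Dt *ᵥ 1) = Bt *ᵥ 1 + Φt *ᵥ (Ct *ᵥ (Φt *ᵥ 1)) := by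
    have hc := congrArg (fun M : Matrix (Fin m) (Fin n) ℝ => M *ᵥ (1 : Fin n → ℝ)) hSol2
    simpa [Matrix.add_mulVec, ← Matrix.mulVec_mulVec] using hc
  have hGp : ∀ a, 0 < (G *ᵥ p) a := by
    intro a
    have e : (G *ᵥ p) a = (At *ᵥ 1) a - (At *ᵥ (Φt *ᵥ 1)) a - (Φt *ᵥ (Ct *ᵥ 1)) a
        + (Φt *ᵥ (Ct *ᵥ (Φt *ᵥ 1))) a := by
      have hpv : p = (1 : Fin m → ℝ) - (Φt *ᵥ 1) := by funext x; rw [hp]; rfl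
      rw [hG, hpv]
      simp only [Matrix.sub_mulVec, Matrix.mulVec_sub, ← Matrix.mulVec_mulVec, Pi.sub_apply]
      ring
    have h1a := congrFun hvec1 a
    simp only [Pi.add_apply] at h1a
    have h2 := mulVec_mono_vec hΦtPos (fun i => le_of_lt (hD1 i)) a
    have h3 := hA1 a
    rw [e]
    linarith
  -- perturbation of p
  have hmne : (Finset.univ : Finset (Fin m)).Nonempty := ⟨j0, Finset.mem_univ _⟩
  obtain ⟨a₁, -, hmin⟩ := Finset.exists_min_image Finset.univ (fun a => (G *ᵥ p) a) hmne
  obtain ⟨a₂, -, hmax2⟩ := Finset.exists_max_image Finset.univ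
    (fun a => |(G *ᵥ (1 : Fin m → ℝ)) a|) hmne
  set δ : ℝ := (G *ᵥ p) a₁ with hδdef
  set Mx : ℝ := |(G *ᵥ (1 : Fin m → ℝ)) a₂| with hMxdef
  have hδ : 0 < δ := hGp a₁
  have hMx : 0 ≤ Mx := abs_nonneg _
  set ε : ℝ := δ / (Mx + 1) with hεdef
  have hε : 0 < ε := div_pos hδ (by linarith)
  set p' : Fin m → ℝ := fun a => p a + ε with hp'
  have hp'pos : ∀ a, 0 < p' a := by
    intro a
    have := hp0 a
    rw [hp']
    simp only []
    linarith
  have hGp' : ∀ a, 0 < (G *ᵥ p') a := by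
    intro a
    have hsum : p' = p + ε • (1 : Fin m → ℝ) := by
      funext x
      rw [hp']
      simp [Pi.add_apply, Pi.smul_apply, smul_eq_mul]
    have hsplit : (G *ᵥ p') a = (G *ᵥ p) a + ε * (G *ᵥ (1 : Fin m → ℝ)) a := by
      rw [hsum, Matrix.mulVec_add, Matrix.mulVec_smul]
      simp [Pi.add_apply, Pi.smul_apply, smul_eq_mul]
    rw [hsplit]
    have h1 : δ ≤ (G *ᵥ p) a := hmin a (Finset.mem_univ a)
    have h2 : |(G *ᵥ (1 : Fin m → ℝ)) a| ≤ Mx := hmax2 a (Finset.mem_univ a)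
    obtain ⟨h2a, h2b⟩ := abs_le.mp h2
    have h3 : -(ε * Mx) ≤ ε * (G *ᵥ (1 : Fin m → ℝ)) a := by nlinarith
    have h4 : ε * (Mx + 1) = δ := by
      rw [hεdef]
      field_simp
    nlinarith
  -- the test vector
  set Xt : Matrix (Fin m) (Fin n) ℝ := Matrix.of (fun a b => p' a * q b) with hXt
  have hxhpos : ∀ r : Fin n × Fin m, 0 < vecM Xt r :=
    fun r => mul_pos (hp'pos r.2) (hq r.1)
  set K : Matrix (Fin n × Fin m) (Fin n × Fin m) ℝ :=
    (1 : Matrix (Fin n) (Fin n) ℝ) ⊗ₖ Aω + Dωᵀ ⊗ₖ (1 : Matrix (Fin m) (Fin m) ℝ) with hK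
  set NR : Matrix (Fin n × Fin m) (Fin n × Fin m) ℝ :=
    (1 : Matrix (Fin n) (Fin n) ℝ) ⊗ₖ (cabs A₂ + Φt * Ct)
      + (cabs D₂ + Ct * Φt)ᵀ ⊗ₖ (1 : Matrix (Fin m) (Fin m) ℝ) with hNR
  have hA2Φ0 : ∀ i j, 0 ≤ cabs A₂ i j + (Φt * Ct) i j := by
    intro i j
    have h1 : (0:ℝ) ≤ cabs A₂ i j := norm_nonneg (A₂ i j)
    have h2 := mul_nonneg' hΦtPos hC0 i j
    linarith
  have hD2Φ0 : ∀ i j, 0 ≤ cabs D₂ i j + (Ct * Φt) i j := by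
    intro i j
    have h1 : (0:ℝ) ≤ cabs D₂ i j := norm_nonneg (D₂ i j)
    have h2 := mul_nonneg' hC0 hΦtPos i j
    linarith
  have hN0 : ∀ r s, 0 ≤ NR r s := by
    rintro ⟨i, j⟩ ⟨k, l⟩
    rw [hNR, kron_entry]
    split_ifs <;> simp [Matrix.add_apply] <;>
      linarith [hA2Φ0 j l, hD2Φ0 k i]
  have hGXS : ∀ r, 0 < vecM (G * Xt + Xt * S) r := by
    rintro ⟨i, j⟩
    show 0 < (G * Xt + Xt * S) j i
    rw [Matrix.add_apply]
    have e1 : (G * Xt) j i = (G *ᵥ p') j * q i := by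
      rw [Matrix.mul_apply]
      show ∑ c, G j c * (p' c * q i) = _
      rw [Matrix.mulVec, dotProduct, Finset.sum_mul]
      apply Finset.sum_congr rfl
      intro c _; ring
    have e2 : (Xt * S) j i = p' j * (Sᵀ *ᵥ q) i := by
      rw [Matrix.mul_apply]
      show ∑ c, (p' j * q c) * S c i = _
      rw [Matrix.mulVec, dotProduct, Finset.mul_sum]
      apply Finset.sum_congr rfl
      intro c _
      rw [Matrix.transpose_apply]; ring
    rw [e1, e2]
    have := mul_pos (hGp' j) (hq i)
    have := mul_pos (hp'pos j) (hSq i)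
    linarith
  have hKxv : K *ᵥ vecM Xt = vecM (Aω * Xt + Xt * Dω) := kron_mulVec Aω Dω Xt
  have hNxv : NR *ᵥ vecM Xt
      = vecM ((cabs A₂ + Φt * Ct) * Xt + Xt * (cabs D₂ + Ct * Φt)) :=
    kron_mulVec _ _ Xt
  have hiden : Aω * Xt + Xt * Dω = (G * Xt + Xt * S)
      + ((cabs A₂ + Φt * Ct) * Xt + Xt * (cabs D₂ + Ct * Φt)) := by
    rw [hG, hS, hAt, hDt]
    simp only [Matrix.sub_mul, Matrix.mul_sub, Matrix.add_mul, Matrix.mul_add]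
    abel
  have hNxpos : ∀ r, 0 ≤ (NR *ᵥ vecM Xt) r :=
    mulVec_nonneg' hN0 (fun r => le_of_lt (hxhpos r))
  have hsplitK : ∀ r, (K *ᵥ vecM Xt) r = vecM (G * Xt + Xt * S) r + (NR *ᵥ vecM Xt) r := by
    intro r
    rw [hKxv, hNxv, hiden]
    simp [vecM, Matrix.add_apply]
  have hKxpos : ∀ r, 0 < (K *ᵥ vecM Xt) r := by
    intro r
    rw [hsplitK r]
    have := hGXS r
    have := hNxpos r
    linarith
  -- the contraction factor θ
  have hprodne : (Finset.univ : Finset (Fin n × Fin m)).Nonempty := ⟨(i0, j0), Finset.mem_univ _⟩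
  obtain ⟨r₀, -, hrmax⟩ := Finset.exists_max_image Finset.univ
    (fun r => (NR *ᵥ vecM Xt) r / (K *ᵥ vecM Xt) r) hprodne
  set θ : ℝ := (NR *ᵥ vecM Xt) r₀ / (K *ᵥ vecM Xt) r₀ with hθ
  have hθ0 : 0 ≤ θ := div_nonneg (hNxpos r₀) (le_of_lt (hKxpos r₀))
  have hθ1 : θ < 1 := by
    rw [hθ, div_lt_one (hKxpos r₀)]
    have h1 := hsplitK r₀
    have h2 := hGXS r₀
    linarith
  have hNθK : ∀ r, (NR *ᵥ vecM Xt) r ≤ θ * (K *ᵥ vecM Xt) r := by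
    intro r
    have h1 := hrmax r (Finset.mem_univ r)
    exact (div_le_iff₀ (hKxpos r)).mp h1
  -- the real iteration matrix
  have hKdet := mmatrix_isUnit_det K hKron
  have hKinv := mmatrix_inv_nonneg K hKron
  have hTR0 : ∀ r s, 0 ≤ (K⁻¹ * NR) r s := mul_nonneg' hKinv hN0
  have hTx : ∀ r, ((K⁻¹ * NR) *ᵥ vecM Xt) r ≤ θ * vecM Xt r := by
    intro r
    have h1 : (K⁻¹ * NR) *ᵥ vecM Xt = K⁻¹ *ᵥ (NR *ᵥ vecM Xt) :=
      (Matrix.mulVec_mulVec _ _ _).symm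
    rw [h1]
    calc (K⁻¹ *ᵥ (NR *ᵥ vecM Xt)) r ≤ (K⁻¹ *ᵥ (fun s => θ * (K *ᵥ vecM Xt) s)) r :=
          mulVec_mono_vec hKinv hNθK r
      _ = θ * vecM Xt r := by
          have hfun : (fun s => θ * (K *ᵥ vecM Xt) s) = θ • (K *ᵥ vecM Xt) := rfl
          rw [hfun, Matrix.mulVec_smul, Matrix.mulVec_mulVec,
            Matrix.nonsing_inv_mul K hKdet, Matrix.one_mulVec]
          rfl
  -- part (b)
  have hb : specRad (realToC (K⁻¹ * NR)) ≤ θ := by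
    apply specRad_le _ (vecM Xt) hxhpos θ hθ0
    intro r
    have he : ∀ s, ‖realToC (K⁻¹ * NR) r s‖ = (K⁻¹ * NR) r s := by
      intro s
      show ‖(((K⁻¹ * NR) r s : ℝ) : ℂ)‖ = _
      rw [Complex.norm_real, Real.norm_eq_abs, abs_of_nonneg (hTR0 r s)]
    calc ∑ s, ‖realToC (K⁻¹ * NR) r s‖ * vecM Xt s
        = ∑ s, (K⁻¹ * NR) r s * vecM Xt s := by
          apply Finset.sum_congr rfl
          intro s _
          rw [he s]
      _ = ((K⁻¹ * NR) *ᵥ vecM Xt) r := rfl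
      _ ≤ θ * vecM Xt r := hTx r
  have hblt1 : specRad (realToC (K⁻¹ * NR)) < 1 := lt_of_le_of_lt hb hθ1
  -- part (a): complex domination
  set Kc : Matrix (Fin n × Fin m) (Fin n × Fin m) ℂ :=
    (1 : Matrix (Fin n) (Fin n) ℂ) ⊗ₖ A₁ + D₁ᵀ ⊗ₖ (1 : Matrix (Fin m) (Fin m) ℂ) with hKc
  set Nc : Matrix (Fin n × Fin m) (Fin n × Fin m) ℂ :=
    (1 : Matrix (Fin n) (Fin n) ℂ) ⊗ₖ (A₂ + Φ * C)
      + (D₂ + C * Φ)ᵀ ⊗ₖ (1 : Matrix (Fin m) (Fin m) ℂ) with hNc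
  have hdiagK : ∀ r, K r r ≤ ‖Kc r r‖ := by
    rintro ⟨i, j⟩
    rw [hK, hKc, kron_entry, kron_entry]
    simp only [eq_self_iff_true, if_true]
    have e1 : Aω j j = wlin ω (A₁ j j) := by rw [hAω]; simp [omegaComp]
    have e2 : Dω i i = wlin ω (D₁ i i) := by rw [hDω]; simp [omegaComp]
    rw [e1, e2, ← wlin_add]
    exact wlin_le_abs hω _
  have hoffK : ∀ r s, r ≠ s → ‖Kc r s‖ ≤ -(K r s) := by
    rintro ⟨i, j⟩ ⟨k, l⟩ hrs
    rw [hK, hKc, kron_entry, kron_entry]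
    by_cases h1 : i = k
    · by_cases h2 : j = l
      · exact absurd (by rw [h1, h2]) hrs
      · have e1 : Aω j l = -‖A₁ j l‖ := by
          rw [hAω]
          show (if j = l then wlin ω (A₁ j j) else -‖A₁ j l‖) = _
          rw [if_neg h2]
        simp [h1, h2, e1]
    · by_cases h2 : j = l
      · have e2 : Dω k i = -‖D₁ k i‖ := by
          rw [hDω]
          show (if k = i then wlin ω (D₁ k k) else -‖D₁ k i‖) = _
          rw [if_neg (fun h : k = i => h1 h.symm)]
        simp [h1, h2, e2]
      · simp [h1, h2]
  obtain ⟨hKcdet, hKcinv⟩ := hmat_inv hKron hdiagK hoffK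
  have hΦC : ∀ a b, ‖(Φ * C) a b‖ ≤ (Φt * Ct) a b :=
    cabs_mul_le hΦle (fun i j => le_of_eq rfl)
  have hCΦ : ∀ a b, ‖(C * Φ) a b‖ ≤ (Ct * Φt) a b :=
    cabs_mul_le (fun i j => le_of_eq rfl) hΦle
  have hdomN : ∀ r s, ‖Nc r s‖ ≤ NR r s := by
    rintro ⟨i, j⟩ ⟨k, l⟩
    rw [hNc, hNR, kron_entry, kron_entry]
    have h1 : ‖(A₂ + Φ * C) j l‖ ≤ (cabs A₂ + Φt * Ct) j l := by
      rw [Matrix.add_apply, Matrix.add_apply]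
      calc ‖A₂ j l + (Φ * C) j l‖
          ≤ ‖A₂ j l‖ + ‖(Φ * C) j l‖ := norm_add_le _ _
        _ ≤ cabs A₂ j l + (Φt * Ct) j l := by
            have hca : ‖A₂ j l‖ = cabs A₂ j l := rfl
            linarith [hΦC j l]
    have h2 : ‖(D₂ + C * Φ) k i‖ ≤ (cabs D₂ + Ct * Φt) k i := by
      rw [Matrix.add_apply, Matrix.add_apply]
      calc ‖D₂ k i + (C * Φ) k i‖
          ≤ ‖D₂ k i‖ + ‖(C * Φ) k i‖ := norm_add_le _ _
        _ ≤ cabs D₂ k i + (Ct * Φt) k i := by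
            have hca : ‖D₂ k i‖ = cabs D₂ k i := rfl
            linarith [hCΦ k i]
    by_cases hik : i = k
    · by_cases hjl : j = l
      · rw [if_pos hik, if_pos hjl, if_pos hik, if_pos hjl]
        calc ‖(A₂ + Φ * C) j l + (D₂ + C * Φ) k i‖
            ≤ ‖(A₂ + Φ * C) j l‖ + ‖(D₂ + C * Φ) k i‖ :=
              norm_add_le _ _
          _ ≤ _ := add_le_add h1 h2
      · rw [if_pos hik, if_neg hjl, if_pos hik, if_neg hjl, add_zero, add_zero]
        exact h1
    · by_cases hjl : j = l
      · rw [if_neg hik, if_pos hjl, if_neg hik, if_pos hjl, zero_add, zero_add]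
        exact h2
      · rw [if_neg hik, if_neg hjl, if_neg hik, if_neg hjl, add_zero, add_zero]
        simp
  have hdomT : ∀ r s, ‖(Kc⁻¹ * Nc) r s‖ ≤ (K⁻¹ * NR) r s :=
    cabs_mul_le hKcinv hdomN
  have ha := specRad_le_specRad_of_abs_le (Kc⁻¹ * Nc) (K⁻¹ * NR) hdomT
  exact ⟨ha, hblt1⟩
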